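/- At every point of U, q satisfies the decoupled Riccati equation along backward characteristics: q_t − c·q_x = a₀ + a₂·q², where a₂ < 0 (Theorem 1.2, equation for q). -/

import Mathlib

open Real

/-- Partial derivative with respect to `t` (the first coordinate). -/
noncomputable def pdt (f : ℝ × ℝ → ℝ) (pt : ℝ × ℝ) : ℝ := fderiv ℝ f pt (1, 0)

/-- Partial derivative with respect to `x` (the second coordinate). -/
noncomputable def pdx (f : ℝ × ℝ → ℝ) (pt : ℝ × ℝ) : ℝ := fderiv ℝ f pt (0, 1)


lemma pdswap {f : ℝ × ℝ → ℝ} {pt : ℝ × ℝ} (hf : ContDiffAt ℝ 2 f pt) (v w : ℝ × ℝ) :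
    fderiv ℝ (fun p => fderiv ℝ f p w) pt v = fderiv ℝ (fun p => fderiv ℝ f p v) pt w := by
  have hd : DifferentiableAt ℝ (fderiv ℝ f) pt :=
    (hf.fderiv_right (m := 1) (le_refl 2)).differentiableAt one_ne_zero
  have key : ∀ a : ℝ × ℝ, fderiv ℝ (fun p => fderiv ℝ f p a) pt
      = (fderiv ℝ (fderiv ℝ f) pt).flip a := by
    intro a
    have h1 : HasFDerivAt (fun p => fderiv ℝ f p a)
        ((fderiv ℝ (fderiv ℝ f) pt).flip a) pt := by
      have h2 := hd.hasFDerivAt.clm_apply (hasFDerivAt_const a pt)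
      simpa using h2
    exact h1.fderiv
  rw [key w, key v]
  simp only [ContinuousLinearMap.flip_apply]
  exact hf.isSymmSndFDerivAt (by norm_num) v w

lemma fd_mul {f g : ℝ × ℝ → ℝ} {pt v : ℝ × ℝ}
    (hf : DifferentiableAt ℝ f pt) (hg : DifferentiableAt ℝ g pt) :
    fderiv ℝ (fun p => f p * g p) pt v
      = fderiv ℝ f pt v * g pt + f pt * fderiv ℝ g pt v := by
  rw [fderiv_fun_mul hf hg]; simp [smul_eq_mul]; ring

lemma fd_add {f g : ℝ × ℝ → ℝ} {pt v : ℝ × ℝ}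
    (hf : DifferentiableAt ℝ f pt) (hg : DifferentiableAt ℝ g pt) :
    fderiv ℝ (fun p => f p + g p) pt v = fderiv ℝ f pt v + fderiv ℝ g pt v := by
  rw [fderiv_fun_add hf hg]; simp

lemma fd_sub {f g : ℝ × ℝ → ℝ} {pt v : ℝ × ℝ}
    (hf : DifferentiableAt ℝ f pt) (hg : DifferentiableAt ℝ g pt) :
    fderiv ℝ (fun p => f p - g p) pt v = fderiv ℝ f pt v - fderiv ℝ g pt v := by
  rw [fderiv_fun_sub hf hg]; simp

lemma fd_const_mul {f : ℝ × ℝ → ℝ} {pt v : ℝ × ℝ} (c : ℝ)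
    (hf : DifferentiableAt ℝ f pt) :
    fderiv ℝ (fun p => c * f p) pt v = c * fderiv ℝ f pt v := by
  rw [fderiv_const_mul hf c]; simp

lemma fd_neg {f : ℝ × ℝ → ℝ} {pt v : ℝ × ℝ} :
    fderiv ℝ (fun p => -f p) pt v = -fderiv ℝ f pt v := by
  rw [fderiv_fun_neg]; simp

lemma pdx_app (f : ℝ × ℝ → ℝ) (q : ℝ × ℝ) : pdx f q = fderiv ℝ f q (0,1) := rfl

lemma fdx_pdx (f : ℝ × ℝ → ℝ) (q v : ℝ × ℝ) :
    fderiv ℝ (pdx f) q v = fderiv ℝ (fun p => fderiv ℝ f p (0,1)) q v := rfl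

lemma fd_rpow {f : ℝ × ℝ → ℝ} {pt v : ℝ × ℝ} {e : ℝ}
    (hf : DifferentiableAt ℝ f pt) (h0 : f pt ≠ 0) :
    fderiv ℝ (fun p => f p ^ e) pt v = e * f pt ^ (e - 1) * fderiv ℝ f pt v := by
  rw [(hf.hasFDerivAt.rpow_const (Or.inl h0)).fderiv]
  simp [smul_eq_mul, mul_assoc]
set_option maxHeartbeats 4000000 in
/-- Theorem 1.2, equation for `q`: `q‵ = a₀ + a₂·q²` with `a₂ < 0` on `U`. -/
theorem stmt_10
    (γ Kc : ℝ) (hγ : 1 < γ) (hKc : 0 < Kc)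
    (U : Set (ℝ × ℝ)) (hU : IsOpen U)
    (u z m : ℝ × ℝ → ℝ)
    (hu : ContDiffOn ℝ 2 u U) (hz : ContDiffOn ℝ 2 z U) (hm : ContDiffOn ℝ 2 m U)
    (hzpos : ∀ pt ∈ U, 0 < z pt) (hmpos : ∀ pt ∈ U, 0 < m pt)
    (c p : ℝ × ℝ → ℝ)
    (hc : c = fun pt => Kc * m pt * z pt ^ ((γ + 1) / (γ - 1)))
    (hp : p = fun pt => ((γ - 1) / (2 * γ) * Kc) * (m pt) ^ 2 * z pt ^ (2 * γ / (γ - 1)))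
    (heq1 : ∀ pt ∈ U, pdt z pt + (c pt / m pt) * pdx u pt = 0)
    (heq2 : ∀ pt ∈ U, pdt u pt + m pt * c pt * pdx z pt + 2 * (p pt / m pt) * pdx m pt = 0)
    (heq3 : ∀ pt ∈ U, pdt m pt = 0)
    (α β : ℝ × ℝ → ℝ)
    (hα : α = fun pt => pdx u pt + m pt * pdx z pt + ((γ - 1) / γ) * pdx m pt * z pt)
    (hβ : β = fun pt => pdx u pt - m pt * pdx z pt - ((γ - 1) / γ) * pdx m pt * z pt)
    (yt qt : ℝ × ℝ → ℝ)
    (hyt : yt = fun pt => z pt ^ ((γ + 1) / (2 * (γ - 1))) * α pt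
      + ((γ - 1) / (γ * (3 * γ - 1))) * z pt ^ ((γ + 1) / (2 * (γ - 1)) + 1) * pdx m pt)
    (hqt : qt = fun pt => z pt ^ ((γ + 1) / (2 * (γ - 1))) * β pt
      - ((γ - 1) / (γ * (3 * γ - 1))) * z pt ^ ((γ + 1) / (2 * (γ - 1)) + 1) * pdx m pt)
    (a0t : ℝ × ℝ → ℝ)
    (ha0t : a0t = fun pt => (Kc / γ) * (((γ - 1) / (3 * γ - 1)) * m pt * pdx (pdx m) pt
      - ((3 * γ + 1) * (γ - 1) / (3 * γ - 1) ^ 2) * (pdx m pt) ^ 2)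
      * z pt ^ (3 * (γ + 1) / (2 * (γ - 1)) + 1))
    (a2t : ℝ × ℝ → ℝ)
    (ha2t : a2t = fun pt => -Kc * ((γ + 1) / (2 * (γ - 1))) * z pt ^ ((γ + 1) / (2 * (γ - 1)) - 1))
    (yf qf : ℝ × ℝ → ℝ)
    (hyf : yf = fun pt => m pt ^ (-(3 * (3 - γ)) / (2 * (3 * γ - 1))) * yt pt)
    (hqf : qf = fun pt => m pt ^ (-(3 * (3 - γ)) / (2 * (3 * γ - 1))) * qt pt)
    (a0 a2 : ℝ × ℝ → ℝ)
    (ha0 : a0 = fun pt => m pt ^ (-(3 * (3 - γ)) / (2 * (3 * γ - 1))) * a0t pt)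
    (ha2 : a2 = fun pt => m pt ^ (3 * (3 - γ) / (2 * (3 * γ - 1))) * a2t pt)
 :
    ∀ pt ∈ U,
      pdt qf pt - c pt * pdx qf pt = a0 pt + a2 pt * (qf pt) ^ 2 ∧ a2 pt < 0 := by
  intro pt hpt
  have hnhds : U ∈ nhds pt := hU.mem_nhds hpt
  have hz0 : 0 < z pt := hzpos pt hpt
  have hm0 : 0 < m pt := hmpos pt hpt
  have hz0' : z pt ≠ 0 := ne_of_gt hz0
  have hm0' : m pt ≠ 0 := ne_of_gt hm0
  have hγ0 : γ ≠ 0 := by positivity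
  have hγ1 : γ - 1 ≠ 0 := by intro h; nlinarith
  have h3γ : 3 * γ - 1 ≠ 0 := by intro h; nlinarith
  have cu : ContDiffAt ℝ 2 u pt := hu.contDiffAt hnhds
  have cz : ContDiffAt ℝ 2 z pt := hz.contDiffAt hnhds
  have cm : ContDiffAt ℝ 2 m pt := hm.contDiffAt hnhds
  have du : DifferentiableAt ℝ u pt := cu.differentiableAt two_ne_zero
  have dz : DifferentiableAt ℝ z pt := cz.differentiableAt two_ne_zero
  have dm : DifferentiableAt ℝ m pt := cm.differentiableAt two_ne_zero
  have dux : DifferentiableAt ℝ (fun p => fderiv ℝ u p ((0:ℝ),(1:ℝ))) pt :=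
    ((cu.fderiv_right (m := 1) (le_refl 2)).differentiableAt one_ne_zero).clm_apply (differentiableAt_const _)
  have dzx : DifferentiableAt ℝ (fun p => fderiv ℝ z p ((0:ℝ),(1:ℝ))) pt :=
    ((cz.fderiv_right (m := 1) (le_refl 2)).differentiableAt one_ne_zero).clm_apply (differentiableAt_const _)
  have dmx : DifferentiableAt ℝ (fun p => fderiv ℝ m p ((0:ℝ),(1:ℝ))) pt :=
    ((cm.fderiv_right (m := 1) (le_refl 2)).differentiableAt one_ne_zero).clm_apply (differentiableAt_const _)
  -- extra rfl bridges
  have hzt : fderiv ℝ z pt (1,0) = -Kc * (z pt ^ ((γ+1)/(γ-1)) * fderiv ℝ u pt (0,1)) := by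
    have h1 := heq1 pt hpt
    simp only [hc] at h1
    have hd : Kc * m pt * z pt ^ ((γ+1)/(γ-1)) / m pt = Kc * z pt ^ ((γ+1)/(γ-1)) := by
      field_simp
    rw [hd] at h1
    have h2 : pdt z pt = -Kc * (z pt ^ ((γ+1)/(γ-1)) * pdx u pt) := by linear_combination h1
    exact h2
  have hmt : fderiv ℝ m pt (1,0) = 0 := heq3 pt hpt
  have hev1 : (fun p => fderiv ℝ z p (1,0)) =ᶠ[nhds pt]
      (fun p => -Kc * (z p ^ ((γ+1)/(γ-1)) * fderiv ℝ u p (0,1))) := by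
    filter_upwards [hnhds] with q hq
    have h1 := heq1 q hq
    simp only [hc] at h1
    have hmq : m q ≠ 0 := ne_of_gt (hmpos q hq)
    have hd : Kc * m q * z q ^ ((γ+1)/(γ-1)) / m q = Kc * z q ^ ((γ+1)/(γ-1)) := by field_simp
    rw [hd] at h1
    have h2 : pdt z q = -Kc * (z q ^ ((γ+1)/(γ-1)) * pdx u q) := by linear_combination h1
    exact h2
  have hev2 : (fun p => fderiv ℝ u p (1,0)) =ᶠ[nhds pt]
      (fun p => -(Kc * (m p * m p * (z p ^ ((γ+1)/(γ-1)) * fderiv ℝ z p (0,1)))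
        + 2*((γ-1)/(2*γ)*Kc) * (m p * (z p ^ (2*γ/(γ-1)) * fderiv ℝ m p (0,1))))) := by
    filter_upwards [hnhds] with q hq
    have h1 := heq2 q hq
    simp only [hc, hp] at h1
    have hmq : m q ≠ 0 := ne_of_gt (hmpos q hq)
    have hd : (γ-1)/(2*γ)*Kc * m q ^ 2 * z q ^ (2*γ/(γ-1)) / m q
        = (γ-1)/(2*γ)*Kc * m q * z q ^ (2*γ/(γ-1)) := by field_simp
    rw [hd] at h1
    have h2 : pdt u q = -(Kc * (m q * m q * (z q ^ ((γ+1)/(γ-1)) * pdx z q))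
        + 2*((γ-1)/(2*γ)*Kc) * (m q * (z q ^ (2*γ/(γ-1)) * pdx m q))) := by linear_combination h1
    exact h2
  have hev3 : (fun p => fderiv ℝ m p (1,0)) =ᶠ[nhds pt] (fun _ => (0:ℝ)) := by
    filter_upwards [hnhds] with q hq
    exact heq3 q hq
  have hmxt : fderiv ℝ (fun p => fderiv ℝ m p (0,1)) pt (1,0) = 0 := by
    rw [pdswap cm (1,0) (0,1), hev3.fderiv_eq]
    simp
  -- differentiability of auxiliary products
  have dze2 : DifferentiableAt ℝ (fun p => z p ^ ((γ+1)/(γ-1))) pt := dz.rpow_const (Or.inl hz0')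
  have dze3 : DifferentiableAt ℝ (fun p => z p ^ (2*γ/(γ-1))) pt := dz.rpow_const (Or.inl hz0')
  have dP1 : DifferentiableAt ℝ (fun p => z p ^ ((γ+1)/(γ-1)) * fderiv ℝ u p (0,1)) pt := dze2.mul dux
  have dmm : DifferentiableAt ℝ (fun p => m p * m p) pt := dm.mul dm
  have dP2 : DifferentiableAt ℝ (fun p => z p ^ ((γ+1)/(γ-1)) * fderiv ℝ z p (0,1)) pt := dze2.mul dzx
  have dP3 : DifferentiableAt ℝ (fun p => m p * m p * (z p ^ ((γ+1)/(γ-1)) * fderiv ℝ z p (0,1))) pt := dmm.mul dP2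
  have dP4 : DifferentiableAt ℝ (fun p => z p ^ (2*γ/(γ-1)) * fderiv ℝ m p (0,1)) pt := dze3.mul dmx
  have dP5 : DifferentiableAt ℝ (fun p => m p * (z p ^ (2*γ/(γ-1)) * fderiv ℝ m p (0,1))) pt := dm.mul dP4
  have dP6 : DifferentiableAt ℝ (fun p => Kc * (m p * m p * (z p ^ ((γ+1)/(γ-1)) * fderiv ℝ z p (0,1)))) pt := dP3.const_mul _
  have dP7 : DifferentiableAt ℝ (fun p => 2*((γ-1)/(2*γ)*Kc) * (m p * (z p ^ (2*γ/(γ-1)) * fderiv ℝ m p (0,1)))) pt := dP5.const_mul _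
  have hzxt : fderiv ℝ (fun p => fderiv ℝ z p (0,1)) pt (1,0)
      = -Kc * ((((γ+1)/(γ-1)) * z pt ^ ((γ+1)/(γ-1) - 1) * fderiv ℝ z pt (0,1)) * fderiv ℝ u pt (0,1)
        + z pt ^ ((γ+1)/(γ-1)) * fderiv ℝ (fun p => fderiv ℝ u p (0,1)) pt (0,1)) := by
    rw [pdswap cz (1,0) (0,1), hev1.fderiv_eq]
    simp (disch := first | assumption | exact differentiableAt_const _) only
      [fd_neg, fd_add, fd_mul, fd_const_mul, fd_rpow, fderiv_fun_const, Pi.zero_apply,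
       ContinuousLinearMap.zero_apply, mul_zero, zero_mul, add_zero, zero_add, sub_zero]
  have huxt : fderiv ℝ (fun p => fderiv ℝ u p (0,1)) pt (1,0)
      = -(Kc * ((fderiv ℝ m pt (0,1) * m pt + m pt * fderiv ℝ m pt (0,1)) * (z pt ^ ((γ+1)/(γ-1)) * fderiv ℝ z pt (0,1))
          + m pt * m pt * ((((γ+1)/(γ-1)) * z pt ^ ((γ+1)/(γ-1) - 1) * fderiv ℝ z pt (0,1)) * fderiv ℝ z pt (0,1)
            + z pt ^ ((γ+1)/(γ-1)) * fderiv ℝ (fun p => fderiv ℝ z p (0,1)) pt (0,1)))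
        + 2*((γ-1)/(2*γ)*Kc) * (fderiv ℝ m pt (0,1) * (z pt ^ (2*γ/(γ-1)) * fderiv ℝ m pt (0,1))
          + m pt * (((2*γ/(γ-1)) * z pt ^ (2*γ/(γ-1) - 1) * fderiv ℝ z pt (0,1)) * fderiv ℝ m pt (0,1)
            + z pt ^ (2*γ/(γ-1)) * fderiv ℝ (fun p => fderiv ℝ m p (0,1)) pt (0,1)))) := by
    rw [pdswap cu (1,0) (0,1), hev2.fderiv_eq]
    simp (disch := first | assumption | exact differentiableAt_const _) only
      [fd_neg, fd_add, fd_mul, fd_const_mul, fd_rpow, fderiv_fun_const, Pi.zero_apply,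
       ContinuousLinearMap.zero_apply, mul_zero, zero_mul, add_zero, zero_add, sub_zero]
  have dmκ : DifferentiableAt ℝ (fun p => m p ^ (-(3*(3-γ))/(2*(3*γ-1)))) pt := dm.rpow_const (Or.inl hm0')
  have dzν : DifferentiableAt ℝ (fun p => z p ^ ((γ+1)/(2*(γ-1)))) pt := dz.rpow_const (Or.inl hz0')
  have dzν1 : DifferentiableAt ℝ (fun p => z p ^ ((γ+1)/(2*(γ-1)) + 1)) pt := dz.rpow_const (Or.inl hz0')
  have dmzx : DifferentiableAt ℝ (fun p => m p * fderiv ℝ z p (0,1)) pt := dm.mul dzx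
  have dumzx : DifferentiableAt ℝ (fun p => fderiv ℝ u p (0,1) - m p * fderiv ℝ z p (0,1)) pt := dux.sub dmzx
  have dDmx : DifferentiableAt ℝ (fun p => (γ-1)/γ * fderiv ℝ m p (0,1)) pt := dmx.const_mul _
  have dDmxz : DifferentiableAt ℝ (fun p => (γ-1)/γ * fderiv ℝ m p (0,1) * z p) pt := dDmx.mul dz
  have dβ : DifferentiableAt ℝ (fun p => fderiv ℝ u p (0,1) - m p * fderiv ℝ z p (0,1) - (γ-1)/γ * fderiv ℝ m p (0,1) * z p) pt := dumzx.sub dDmxz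
  have dq1 : DifferentiableAt ℝ (fun p => z p ^ ((γ+1)/(2*(γ-1))) * (fderiv ℝ u p (0,1) - m p * fderiv ℝ z p (0,1) - (γ-1)/γ * fderiv ℝ m p (0,1) * z p)) pt := dzν.mul dβ
  have dq2a : DifferentiableAt ℝ (fun p => (γ-1)/(γ*(3*γ-1)) * z p ^ ((γ+1)/(2*(γ-1)) + 1)) pt := dzν1.const_mul _
  have dq2 : DifferentiableAt ℝ (fun p => (γ-1)/(γ*(3*γ-1)) * z p ^ ((γ+1)/(2*(γ-1)) + 1) * fderiv ℝ m p (0,1)) pt := dq2a.mul dmx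
  have dqt : DifferentiableAt ℝ (fun p => z p ^ ((γ+1)/(2*(γ-1))) * (fderiv ℝ u p (0,1) - m p * fderiv ℝ z p (0,1) - (γ-1)/γ * fderiv ℝ m p (0,1) * z p) - (γ-1)/(γ*(3*γ-1)) * z p ^ ((γ+1)/(2*(γ-1)) + 1) * fderiv ℝ m p (0,1)) pt := dq1.sub dq2
  have hP1 : z pt ^ ((γ+1)/(2*(γ-1)) + 1) = z pt ^ ((γ+1)/(2*(γ-1))) * z pt := by
    rw [Real.rpow_add hz0, Real.rpow_one]
  have hP2 : z pt ^ ((γ+1)/(2*(γ-1)) + 1 - 1) = z pt ^ ((γ+1)/(2*(γ-1))) := by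
    rw [add_sub_cancel_right]
  have hP3 : z pt ^ ((γ+1)/(2*(γ-1)) - 1) = z pt ^ ((γ+1)/(2*(γ-1))) / z pt := by
    rw [Real.rpow_sub hz0, Real.rpow_one]
  have hP4 : z pt ^ ((γ+1)/(γ-1)) = z pt ^ ((γ+1)/(2*(γ-1))) * z pt ^ ((γ+1)/(2*(γ-1))) := by
    rw [← Real.rpow_add hz0]
    congr 1
    field_simp
    ring
  have hP5 : z pt ^ ((γ+1)/(γ-1) - 1) = z pt ^ ((γ+1)/(2*(γ-1))) * z pt ^ ((γ+1)/(2*(γ-1))) / z pt := by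
    rw [Real.rpow_sub hz0, Real.rpow_one, hP4]
  have hP6 : z pt ^ (2*γ/(γ-1)) = z pt ^ ((γ+1)/(2*(γ-1))) * z pt ^ ((γ+1)/(2*(γ-1))) * z pt := by
    rw [show 2*γ/(γ-1) = (γ+1)/(2*(γ-1)) + (γ+1)/(2*(γ-1)) + 1 from by field_simp; ring,
      Real.rpow_add hz0, Real.rpow_add hz0, Real.rpow_one]
  have hP7 : z pt ^ (2*γ/(γ-1) - 1) = z pt ^ ((γ+1)/(2*(γ-1))) * z pt ^ ((γ+1)/(2*(γ-1))) := by
    rw [Real.rpow_sub hz0, Real.rpow_one, hP6]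
    field_simp
  have hP8 : z pt ^ (3*(γ+1)/(2*(γ-1)) + 1) = z pt ^ ((γ+1)/(2*(γ-1))) * z pt ^ ((γ+1)/(2*(γ-1))) * z pt ^ ((γ+1)/(2*(γ-1))) * z pt := by
    rw [show 3*(γ+1)/(2*(γ-1)) + 1 = (γ+1)/(2*(γ-1)) + (γ+1)/(2*(γ-1)) + (γ+1)/(2*(γ-1)) + 1 from by field_simp; ring,
      Real.rpow_add hz0, Real.rpow_add hz0, Real.rpow_add hz0, Real.rpow_one]
  have hQ1 : m pt ^ (-(3*(3-γ))/(2*(3*γ-1)) - 1) = m pt ^ (-(3*(3-γ))/(2*(3*γ-1))) / m pt := by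
    rw [Real.rpow_sub hm0, Real.rpow_one]
  have hQ2 : m pt ^ (3*(3-γ)/(2*(3*γ-1))) = 1 / m pt ^ (-(3*(3-γ))/(2*(3*γ-1))) := by
    rw [show (3*(3-γ)/(2*(3*γ-1))) = -(-(3*(3-γ))/(2*(3*γ-1))) from by ring, Real.rpow_neg hm0.le,
      one_div]
  have hsne : z pt ^ ((γ+1)/(2*(γ-1))) ≠ 0 := ne_of_gt (Real.rpow_pos_of_pos hz0 _)
  have hMne : m pt ^ (-(3*(3-γ))/(2*(3*γ-1))) ≠ 0 := ne_of_gt (Real.rpow_pos_of_pos hm0 _)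
  constructor
  · show fderiv ℝ qf pt (1,0) - c pt * fderiv ℝ qf pt (0,1) = a0 pt + a2 pt * qf pt ^ 2
    simp only [hqf, hqt, hβ, hc, ha0, ha0t, ha2, ha2t, pdx_app, fdx_pdx]
    simp (disch := first | assumption | exact differentiableAt_const _) only
      [fd_neg, fd_add, fd_sub, fd_mul, fd_const_mul, fd_rpow, fderiv_fun_const, Pi.zero_apply,
       ContinuousLinearMap.zero_apply, mul_zero, zero_mul, add_zero, zero_add, sub_zero]
    rw [hzt, hmt, huxt, hzxt, hmxt]
    rw [hP1, hP2, hP3, hP4, hP5, hP6, hP7, hP8, hQ1, hQ2]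
    field_simp
    ring
  · simp only [ha2, ha2t]
    have h3 : 0 < (γ+1)/(2*(γ-1)) := div_pos (by linarith) (by linarith)
    have h5 : 0 < m pt ^ (3*(3-γ)/(2*(3*γ-1))) * (Kc * ((γ+1)/(2*(γ-1))) * z pt ^ ((γ+1)/(2*(γ-1)) - 1)) := by
      have h4 : 0 < m pt ^ (3*(3-γ)/(2*(3*γ-1))) := Real.rpow_pos_of_pos hm0 _
      have h6 : 0 < z pt ^ ((γ+1)/(2*(γ-1)) - 1) := Real.rpow_pos_of_pos hz0 _
      positivity
    nlinarith [h5]
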